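/- Let G be a c-valued group, let f, g ∈ G and let n ∈ ℤ with fⁿ ≠ 1. If fⁿ commutes with g, then f commutes with g. -/
import Mathlib


variable {G : Type*} [Group G]

/-- `f ≺ g` : strict part of the dominance relation. -/
def vlt (le : G → G → Prop) (f g : G) : Prop := le f g ∧ ¬ le g f

/-- `f ≍ g` : equivalence induced by the dominance relation. -/
def veq (le : G → G → Prop) (f g : G) : Prop := le f g ∧ le g f

/-- A dominance relation on a group `G`, making it a valued group:
a reflexive, transitive, total relation satisfying D1-D4. -/
structure IsValuation (le : G → G → Prop) : Prop where
  refl : ∀ f : G, le f f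
  trans : ∀ f g h : G, le f g → le g h → le f h
  total : ∀ f g : G, le f g ∨ le g f
  d1 : ∀ f : G, f ≠ 1 → vlt le 1 f
  d2 : ∀ f g : G, le (f * g) f ∨ le (f * g) g
  d3 : ∀ f g h : G, le f g → le (h * f * h⁻¹) (h * g * h⁻¹)
  d4 : ∀ f : G, veq le f f⁻¹

/-- A c-dominance relation: a dominance relation moreover satisfying D5 and D6. -/
structure IsCValuation (le : G → G → Prop) extends IsValuation le : Prop where
  d5 : ∀ f g : G, f ≠ 1 → g ≠ 1 → f * g = g * f → veq le f g
  d6 : ∀ f g : G, f ≠ 1 → g ≠ 1 → veq le f g → vlt le (f⁻¹ * g⁻¹ * f * g) f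

/-- Lemma 2.14: in a c-valued group, if `f^n ≠ 1` commutes with `g`,
then `f` commutes with `g`. -/
theorem commute_of_zpow_commute (le : G → G → Prop) (hv : IsCValuation le)
    (f g : G) (n : ℤ) (hfn : f ^ n ≠ 1) (hc : f ^ n * g = g * f ^ n) :
    f * g = g * f := by
  by_contra hne
  have hf : f ≠ 1 := by rintro rfl; simp at hfn
  have hg : g ≠ 1 := by rintro rfl; simp at hne
  set c := f⁻¹ * g⁻¹ * f * g with hcdef
  have hcne : c ≠ 1 := by
    intro h
    apply hne
    simpa [hcdef, mul_assoc] using congrArg (fun x => g * (f * x)) h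
  have hcomg : Commute (f ^ n) g := hc
  have hcomf : Commute (f ^ n) f := (Commute.refl f).zpow_left n
  have h1 : veq le (f ^ n) f := hv.d5 _ _ hfn hf hcomf.eq
  have h2 : veq le (f ^ n) g := hv.d5 _ _ hfn hg hc
  have hfg : veq le f g := ⟨hv.trans _ _ _ h1.2 h2.1, hv.trans _ _ _ h2.2 h1.1⟩
  have hd6 : vlt le c f := hv.d6 f g hf hg hfg
  have hcomc : Commute (f ^ n) c :=
    ((hcomf.inv_right.mul_right hcomg.inv_right).mul_right hcomf).mul_right hcomg
  have h3 : veq le (f ^ n) c := hv.d5 _ _ hfn hcne hcomc.eq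
  exact hd6.2 (hv.trans _ _ _ h1.2 h3.1)
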